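/- Let A be a unital C*-algebra, α : A → A a *-endomorphism, and J a closed ideal of A with J_∞ the reduction ideal (closure of the union of J_n where J₀ = {0}, J_{n+1} = {a ∈ J : α(a) ∈ J_n}). Then J_∞ is the smallest closed α-invariant ideal K of A satisfying: if a ∈ J and α(a) ∈ K then a ∈ K. Moreover, J_∞ = {0} if and only if ker α ∩ J = {0}. -/

import Mathlib

/-- The sequence of ideals `J₀ = {0}`, `J_{n+1} = {a ∈ J : α(a) ∈ J_n}`. -/
def reductionSeq {A : Type*} [CStarAlgebra A] (α : A →⋆ₐ[ℂ] A) (J : Set A) :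
    ℕ → Set A
  | 0 => {0}
  | n + 1 => {a ∈ J | α a ∈ reductionSeq α J n}


section ReductionAux

variable {A : Type*} [CStarAlgebra A]

lemma myContinuous (α : A →⋆ₐ[ℂ] A) : Continuous α :=
  AddMonoidHomClass.continuous_of_bound α 1 fun a => by
    simpa using NonUnitalStarAlgHom.norm_apply_le α a

lemma conj_cfc_self {y : A} (hy : IsSelfAdjoint y) (f : ℝ → ℝ)
    (hf : ContinuousOn f (spectrum ℝ y)) :
    cfc f y * y * cfc f y = cfc (fun t => f t * (t * f t)) y := by
  rw [mul_assoc, cfc_mul f (fun t => t * f t) y hf (continuous_id.continuousOn.mul hf)]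
  congr 1
  rw [cfc_mul (fun t : ℝ => t) f y continuous_id.continuousOn hf, cfc_id' ℝ y]

lemma hered [PartialOrder A] [StarOrderedRing A]
    {I : TwoSidedIdeal A} (hI : IsClosed (I : Set A))
    {x y : A} (hx : 0 ≤ x) (hxy : x ≤ y) (hy : y ∈ I) : x ∈ I := by
  have hxspec : ∀ t ∈ spectrum ℝ x, 0 ≤ t := spectrum_nonneg_of_nonneg hx
  have hyspec : ∀ t ∈ spectrum ℝ y, 0 ≤ t := spectrum_nonneg_of_nonneg (hx.trans hxy)
  have hxsa : IsSelfAdjoint x := .of_nonneg hx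
  have hysa : IsSelfAdjoint y := .of_nonneg (hx.trans hxy)
  suffices h : x ∈ closure (I : Set A) by rwa [hI.closure_eq] at h
  rw [Metric.mem_closure_iff]
  intro ε hε
  set δ : ℝ := ε / 2 with hδdef
  have hδ : 0 < δ := half_pos hε
  have hpos : ∀ t ∈ spectrum ℝ y, 0 < t + δ := fun t ht => by
    have := hyspec t ht; linarith
  set s : A := cfc Real.sqrt x with hs
  have hs_sa : IsSelfAdjoint s := cfc_predicate _ x
  have hss : s * s = x := by
    rw [hs, ← cfc_mul _ _ x (by fun_prop) (by fun_prop)]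
    calc cfc (fun t => Real.sqrt t * Real.sqrt t) x
        = cfc (id : ℝ → ℝ) x :=
          cfc_congr fun t ht => Real.mul_self_sqrt (hxspec t ht)
      _ = x := cfc_id ℝ x
  set r : ℝ → ℝ := fun t => Real.sqrt ((t + δ)⁻¹) with hr
  have hrcont : ContinuousOn r (spectrum ℝ y) :=
    Real.continuous_sqrt.comp_continuousOn <|
      ((continuous_id.add continuous_const).continuousOn).inv₀
        fun t ht => (hpos t ht).ne'
  set ψ : ℝ → ℝ := fun t => r t * (t * r t) with hψ
  have hψcont : ContinuousOn ψ (spectrum ℝ y) :=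
    hrcont.mul (continuous_id.continuousOn.mul hrcont)
  have hψ_eq : ∀ t ∈ spectrum ℝ y, ψ t = t * (t + δ)⁻¹ := by
    intro t ht
    have htδ := hpos t ht
    have h1 : r t * r t = (t + δ)⁻¹ :=
      Real.mul_self_sqrt (by positivity)
    calc ψ t = (r t * r t) * t := by ring
      _ = t * (t + δ)⁻¹ := by rw [h1]; ring
  have hψ_le : ∀ t ∈ spectrum ℝ y, 0 ≤ 1 - ψ t ∧ (1 - ψ t) * t ≤ δ := by
    intro t ht
    have ht0 := hyspec t ht
    have htδ := hpos t ht
    rw [hψ_eq t ht]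
    constructor
    · rw [sub_nonneg]
      rw [mul_inv_le_iff₀ htδ]; linarith
    · have : 1 - t * (t + δ)⁻¹ = δ * (t + δ)⁻¹ := by
        field_simp
        ring
      rw [this, mul_assoc, mul_comm _ t, ← mul_assoc,
        mul_inv_le_iff₀ htδ]
      nlinarith
  set w : A := cfc r y with hw
  set c : A := (s * w) * y * (w * s) with hc
  have hcI : c ∈ I := by
    rw [hc, mul_assoc]
    exact I.mul_mem_left _ _ (I.mul_mem_right _ _ hy)
  have hwyw : w * y * w = cfc ψ y := conj_cfc_self hysa r hrcont
  set ρ : ℝ → ℝ := fun t => 1 - ψ t with hρ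
  have hρcont : ContinuousOn ρ (spectrum ℝ y) := continuousOn_const.sub hψcont
  have hxc : x - c = s * cfc ρ y * s := by
    have h1 : cfc ρ y = 1 - cfc ψ y := by
      rw [hρ]
      rw [cfc_sub (fun _ => (1:ℝ)) ψ y continuousOn_const hψcont, cfc_const_one ℝ y]
    have h2 : c = s * (w * y * w) * s := by rw [hc]; noncomm_ring
    rw [h1, h2, hwyw, ← hss]; noncomm_ring
  set u : A := cfc (fun t => Real.sqrt (ρ t)) y with hu
  have hucont : ContinuousOn (fun t => Real.sqrt (ρ t)) (spectrum ℝ y) :=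
    Real.continuous_sqrt.comp_continuousOn hρcont
  have hu_sa : IsSelfAdjoint u := cfc_predicate _ y
  have huu : u * u = cfc ρ y := by
    rw [hu, ← cfc_mul _ _ y hucont hucont]
    exact cfc_congr fun t ht => Real.mul_self_sqrt (hψ_le t ht).1
  set v : A := u * s with hv
  have hsv : star v = s * u := by rw [hv, star_mul, hs_sa.star_eq, hu_sa.star_eq]
  have hxc2 : x - c = star v * v := by
    rw [hxc, ← huu, hsv, hv]; noncomm_ring
  have hvv : v * star v = u * x * u := by
    rw [hsv, hv, ← hss]; noncomm_ring
  have huxu_le : u * x * u ≤ u * y * u := by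
    have := star_left_conjugate_le_conjugate hxy u
    rwa [hu_sa.star_eq] at this
  have huxu_nonneg : 0 ≤ u * x * u := by
    have := star_left_conjugate_nonneg hx u
    rwa [hu_sa.star_eq] at this
  have huyu : u * y * u = cfc (fun t => Real.sqrt (ρ t) * (t * Real.sqrt (ρ t))) y :=
    conj_cfc_self hysa _ hucont
  have hnorm1 : ‖u * y * u‖ ≤ δ := by
    rw [huyu]
    apply norm_cfc_le hδ.le
    intro t ht
    have h1 := (hψ_le t ht).1
    have h2 := (hψ_le t ht).2
    have ht0 := hyspec t ht
    have : Real.sqrt (ρ t) * (t * Real.sqrt (ρ t)) = ρ t * t := by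
      rw [show Real.sqrt (ρ t) * (t * Real.sqrt (ρ t)) = (Real.sqrt (ρ t) * Real.sqrt (ρ t)) * t by ring,
        Real.mul_self_sqrt h1]
    rw [this, Real.norm_eq_abs, abs_of_nonneg (by positivity)]
    exact h2
  have hfinal : ‖x - c‖ ≤ δ := by
    calc ‖x - c‖ = ‖star v * v‖ := by rw [hxc2]
      _ = ‖v‖ * ‖v‖ := CStarRing.norm_star_mul_self
      _ = ‖v * star v‖ := CStarRing.norm_self_mul_star.symm
      _ = ‖u * x * u‖ := by rw [hvv]
      _ ≤ ‖u * y * u‖ := CStarAlgebra.norm_le_norm_of_nonneg_of_le huxu_nonneg huxu_le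
      _ ≤ δ := hnorm1
  exact ⟨c, hcI, by rw [dist_eq_norm]; calc ‖x - c‖ ≤ δ := hfinal
                     _ < ε := by rw [hδdef]; linarith⟩

lemma cut_mem [PartialOrder A] [StarOrderedRing A]
    {I : TwoSidedIdeal A} (hI : IsClosed (I : Set A))
    {y c : A} (hy : 0 ≤ y) (hc : IsSelfAdjoint c) (hcI : c ∈ I)
    {ε : ℝ} (h : ‖y - c‖ < ε) :
    cfc (fun t : ℝ => max (t - ε) 0) y ∈ I := by
  have hyspec : ∀ t ∈ spectrum ℝ y, 0 ≤ t := spectrum_nonneg_of_nonneg hy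
  have hysa : IsSelfAdjoint y := .of_nonneg hy
  set δ : ℝ := ‖y - c‖ with hδdef
  have hδ0 : 0 ≤ δ := norm_nonneg _
  have hδε : δ < ε := h
  have hεδ : 0 < ε - δ := by linarith
  have h1 : y - algebraMap ℝ A δ ≤ c := by
    have h2 : y - c ≤ algebraMap ℝ A δ :=
      IsSelfAdjoint.le_algebraMap_norm_self (hysa.sub hc)
    calc y - algebraMap ℝ A δ ≤ y - (y - c) := by
          exact sub_le_sub_left h2 y
      _ = c := by abel
  set g : ℝ → ℝ := fun t => max (t - ε) 0 with hg
  have hgcont : Continuous g := (continuous_id.sub continuous_const).max continuous_const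
  set q : ℝ → ℝ := fun t => g t / max (t - δ) (ε - δ) with hq
  have hden : ∀ t : ℝ, 0 < max (t - δ) (ε - δ) := fun t => lt_max_of_lt_right hεδ
  have hqcont : Continuous q :=
    hgcont.div ((continuous_id.sub continuous_const).max continuous_const)
      fun t => (hden t).ne'
  have hq0 : ∀ t, 0 ≤ q t := fun t =>
    div_nonneg (le_max_right _ _) (hden t).le
  set p : A := cfc (fun t => Real.sqrt (q t)) y with hp
  have hpcont : ContinuousOn (fun t => Real.sqrt (q t)) (spectrum ℝ y) :=
    (Real.continuous_sqrt.comp hqcont).continuousOn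
  have hp_sa : IsSelfAdjoint p := cfc_predicate _ y
  -- key identity : p * (y - δ) * p = cfc g y
  have hyd : y - algebraMap ℝ A δ = cfc (fun t => t - δ) y := by
    rw [cfc_sub (fun t : ℝ => t) (fun _ => δ) y continuous_id.continuousOn continuousOn_const,
      cfc_id' ℝ y, cfc_const δ y]
  have hkey : p * (y - algebraMap ℝ A δ) * p = cfc g y := by
    rw [hyd, hp, mul_assoc,
      ← cfc_mul (fun t : ℝ => t - δ) (fun t => Real.sqrt (q t)) y
        ((continuous_id.sub continuous_const).continuousOn) hpcont,
      ← cfc_mul (fun t => Real.sqrt (q t)) (fun t => (t - δ) * Real.sqrt (q t)) y hpcont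
        (((continuous_id.sub continuous_const).continuousOn).mul hpcont)]
    apply cfc_congr
    intro t ht
    have hsq : Real.sqrt (q t) * Real.sqrt (q t) = q t := Real.mul_self_sqrt (hq0 t)
    show Real.sqrt (q t) * ((t - δ) * Real.sqrt (q t)) = g t
    rw [show Real.sqrt (q t) * ((t - δ) * Real.sqrt (q t))
        = (Real.sqrt (q t) * Real.sqrt (q t)) * (t - δ) by ring, hsq]
    rcases le_or_gt ε t with hte | hte
    · have hmax : max (t - δ) (ε - δ) = t - δ := max_eq_left (by linarith)
      rw [hq]
      show g t / max (t - δ) (ε - δ) * (t - δ) = g t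
      rw [hmax, div_mul_cancel₀ _ (by linarith : t - δ ≠ 0)]
    · have hg0 : g t = 0 := max_eq_right (by linarith)
      rw [hq]
      show g t / max (t - δ) (ε - δ) * (t - δ) = g t
      rw [hg0]; simp
  have hgy_nonneg : (0:A) ≤ cfc g y := cfc_nonneg fun t _ => le_max_right _ _
  have hle : cfc g y ≤ p * c * p := by
    rw [← hkey]
    have := star_left_conjugate_le_conjugate h1 p
    rwa [hp_sa.star_eq] at this
  have hpcp : p * c * p ∈ I := by
    rw [mul_assoc]
    exact I.mul_mem_left _ _ (I.mul_mem_right _ _ hcI)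
  exact hered hI hgy_nonneg hle hpcp

variable (α : A →⋆ₐ[ℂ] A) (J : TwoSidedIdeal A)

lemma mem_succ_iff {a : A} {n : ℕ} :
    a ∈ reductionSeq α (J : Set A) (n + 1) ↔ a ∈ J ∧ α a ∈ reductionSeq α (J : Set A) n := by
  simp [reductionSeq, Set.mem_setOf_eq, SetLike.mem_coe]

lemma seq_ideal (hJ : IsClosed (J : Set A)) (n : ℕ) :
    ∃ I : TwoSidedIdeal A, (I : Set A) = reductionSeq α (J : Set A) n
      ∧ IsClosed (reductionSeq α (J : Set A) n) := by
  induction n with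
  | zero =>
    refine ⟨TwoSidedIdeal.mk' {0} rfl (fun hx hy => by simp_all) (fun hx => by simp_all)
      (fun hx => by simp_all) (fun hx => by simp_all), ?_, ?_⟩
    · exact TwoSidedIdeal.coe_mk' _ _ _ _ _ _
    · exact isClosed_singleton
  | succ n ih =>
    obtain ⟨I, hI, hIc⟩ := ih
    have hmem : ∀ x, x ∈ reductionSeq α (J : Set A) (n + 1) ↔ x ∈ J ∧ α x ∈ I := by
      intro x
      rw [mem_succ_iff]
      constructor
      · rintro ⟨h1, h2⟩; exact ⟨h1, by rw [← SetLike.mem_coe, hI]; exact h2⟩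
      · rintro ⟨h1, h2⟩; exact ⟨h1, by rw [← SetLike.mem_coe, hI] at h2; exact h2⟩
    refine ⟨TwoSidedIdeal.mk' (reductionSeq α (J : Set A) (n + 1))
      (by rw [hmem]; exact ⟨J.zero_mem, by rw [map_zero]; exact I.zero_mem⟩)
      (fun {x y} hx hy => by
        rw [hmem] at *
        exact ⟨J.add_mem hx.1 hy.1, by rw [map_add]; exact I.add_mem hx.2 hy.2⟩)
      (fun {x} hx => by
        rw [hmem] at *
        exact ⟨J.neg_mem hx.1, by rw [map_neg]; exact I.neg_mem hx.2⟩)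
      (fun {x y} hy => by
        rw [hmem] at *
        exact ⟨J.mul_mem_left x y hy.1, by rw [map_mul]; exact I.mul_mem_left _ _ hy.2⟩)
      (fun {x y} hx => by
        rw [hmem] at *
        exact ⟨J.mul_mem_right x y hx.1, by rw [map_mul]; exact I.mul_mem_right _ _ hx.2⟩),
      by simp [TwoSidedIdeal.coe_mk'], ?_⟩
    have : reductionSeq α (J : Set A) (n + 1) = (J : Set A) ∩ α ⁻¹' (I : Set A) := by
      ext x
      rw [hmem x]
      simp [SetLike.mem_coe]
    rw [this]
    exact hJ.inter ((hI ▸ hIc).preimage (myContinuous α))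

lemma seq_mono : ∀ n, reductionSeq α (J : Set A) n ⊆ reductionSeq α (J : Set A) (n + 1) := by
  intro n
  induction n with
  | zero =>
    intro x hx
    have hx' : x = 0 := by simpa [reductionSeq] using hx
    subst hx'
    rw [mem_succ_iff]
    exact ⟨J.zero_mem, by rw [map_zero]; rfl⟩
  | succ n ih =>
    intro x hx
    rw [mem_succ_iff] at hx ⊢
    exact ⟨hx.1, ih hx.2⟩

lemma seq_mono' {m n : ℕ} (h : m ≤ n) :
    reductionSeq α (J : Set A) m ⊆ reductionSeq α (J : Set A) n := by
  induction n with
  | zero => rw [Nat.le_zero] at h; subst h; rfl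
  | succ n ih =>
    rcases Nat.lt_or_ge m (n+1) with h' | h'
    · exact (ih (Nat.lt_succ_iff.mp h')).trans (seq_mono α J n)
    · have : m = n + 1 := le_antisymm h h'
      subst this; rfl

lemma seq_subset_J : ∀ n, reductionSeq α (J : Set A) n ⊆ (J : Set A) := by
  intro n
  cases n with
  | zero => intro x hx
            have hx' : x = 0 := by simpa [reductionSeq] using hx
            subst hx'
            exact SetLike.mem_coe.mpr J.zero_mem
  | succ n => intro x hx; exact SetLike.mem_coe.mpr ((mem_succ_iff α J).mp hx).1

lemma absorb (hJ : IsClosed (J : Set A)) {a : A} (ha : a ∈ J)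
    (hx : α a ∈ closure (⋃ n : ℕ, reductionSeq α (J : Set A) n)) :
    a ∈ closure (⋃ n : ℕ, reductionSeq α (J : Set A) n) := by
  letI := CStarAlgebra.spectralOrder A
  haveI := CStarAlgebra.spectralOrderedRing A
  set U := ⋃ n : ℕ, reductionSeq α (J : Set A) n with hU
  rw [Metric.mem_closure_iff]
  intro ε'' hε''
  set x := α a with hxdef
  set y' : A := star a * a with hy'def
  have hy'0 : 0 ≤ y' := star_mul_self_nonneg a
  set y : A := star x * x with hydef
  have hy0 : 0 ≤ y := star_mul_self_nonneg x
  have hαy' : α y' = y := by rw [hy'def, map_mul, map_star]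
  set ε' : ℝ := (ε'' / 2) ^ 2 with hε'def
  have hε' : 0 < ε' := by positivity
  set δ : ℝ := (min 1 (ε' / (2 * ‖x‖ + 1))) / 2 with hδdef
  have hmin : 0 < min 1 (ε' / (2 * ‖x‖ + 1)) := by
    apply lt_min one_pos
    positivity
  have hδ0 : 0 < δ := by rw [hδdef]; linarith
  obtain ⟨b, hbU, hbx⟩ := Metric.mem_closure_iff.mp hx δ hδ0
  obtain ⟨n, hbn⟩ := Set.mem_iUnion.mp hbU
  obtain ⟨In, hIn, hInc⟩ := seq_ideal α J hJ n
  have hInclosed : IsClosed (In : Set A) := hIn ▸ hInc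
  have hbIn : b ∈ In := by rw [← SetLike.mem_coe, hIn]; exact hbn
  set c : A := star b * b with hcdef
  have hcIn : c ∈ In := In.mul_mem_left _ _ hbIn
  have hc_sa : IsSelfAdjoint c := IsSelfAdjoint.star_mul_self b
  have hxb : ‖x - b‖ < δ := by rw [← dist_eq_norm]; exact hbx
  have hb_norm : ‖b‖ ≤ ‖x‖ + δ := by
    calc ‖b‖ = ‖x - (x - b)‖ := by congr 1; abel
      _ ≤ ‖x‖ + ‖x - b‖ := norm_sub_le _ _
      _ ≤ ‖x‖ + δ := by linarith
  have hyc : ‖y - c‖ < ε' := by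
    have hid : y - c = star x * (x - b) + (star x - star b) * b := by
      rw [hydef, hcdef]; noncomm_ring
    have h1 : ‖y - c‖ ≤ ‖x‖ * ‖x - b‖ + ‖x - b‖ * ‖b‖ := by
      rw [hid]
      calc ‖star x * (x - b) + (star x - star b) * b‖
          ≤ ‖star x * (x - b)‖ + ‖(star x - star b) * b‖ := norm_add_le _ _
        _ ≤ ‖star x‖ * ‖x - b‖ + ‖star x - star b‖ * ‖b‖ := by
            gcongr <;> exact norm_mul_le _ _
        _ = ‖x‖ * ‖x - b‖ + ‖x - b‖ * ‖b‖ := by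
            rw [norm_star, ← star_sub, norm_star]
    have hδ1 : δ ≤ 1 / 2 := by
      rw [hδdef]
      have := min_le_left 1 (ε' / (2 * ‖x‖ + 1))
      linarith
    have hδ2 : δ * (2 * ‖x‖ + 1) ≤ ε' / 2 := by
      have h3 : min 1 (ε' / (2 * ‖x‖ + 1)) ≤ ε' / (2 * ‖x‖ + 1) := min_le_right _ _
      have h4 : (0:ℝ) < 2 * ‖x‖ + 1 := by positivity
      rw [hδdef]
      rw [div_mul_eq_mul_div, div_le_div_iff₀ (by norm_num) (by norm_num : (0:ℝ) < 2)]
      calc min 1 (ε' / (2 * ‖x‖ + 1)) * (2 * ‖x‖ + 1) * 2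
          ≤ (ε' / (2 * ‖x‖ + 1)) * (2 * ‖x‖ + 1) * 2 := by gcongr
        _ = ε' * 2 := by field_simp
    have hnx : (0:ℝ) ≤ ‖x‖ := norm_nonneg x
    have hxb0 : (0:ℝ) ≤ ‖x - b‖ := norm_nonneg _
    nlinarith
  set g : ℝ → ℝ := fun t => max (t - ε') 0 with hgdef
  have hgcont : Continuous g := (continuous_id.sub continuous_const).max continuous_const
  have hgIn : cfc g y ∈ In := cut_mem hInclosed hy0 hc_sa hcIn hyc
  set m : ℝ → ℝ := fun t => (max t ε')⁻¹ with hmdef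
  have hmcont : Continuous m :=
    (continuous_id.max continuous_const).inv₀ fun t => (lt_max_of_lt_right hε').ne'
  set gg : ℝ → ℝ := fun t => m t * g t with hggdef
  have hggcont : Continuous gg := hmcont.mul hgcont
  set u : A := a * cfc gg y' with hudef
  have huJ : u ∈ J := J.mul_mem_right _ _ ha
  have hsa_y' : IsSelfAdjoint y' := .of_nonneg hy'0
  have hsa_y : IsSelfAdjoint y := .of_nonneg hy0
  have hαu : α u = x * cfc gg y := by
    rw [hudef, map_mul]
    congr 1
    rw [StarAlgHom.map_cfc α gg y' hggcont.continuousOn (myContinuous α) hsa_y'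
      (hαy' ▸ hsa_y), hαy']
  have hsplit : cfc gg y = cfc m y * cfc g y :=
    cfc_mul m g y hmcont.continuousOn hgcont.continuousOn
  have hαu_mem : α u ∈ reductionSeq α (J : Set A) n := by
    rw [← hIn, SetLike.mem_coe]
    rw [hαu, hsplit, ← mul_assoc]
    exact In.mul_mem_left _ _ hgIn
  have humem : u ∈ reductionSeq α (J : Set A) (n + 1) :=
    (mem_succ_iff α J).mpr ⟨huJ, hαu_mem⟩
  have huU : u ∈ U := Set.mem_iUnion.mpr ⟨n + 1, humem⟩
  set f : ℝ → ℝ := fun t => 1 - gg t with hfdef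
  have hfcont : Continuous f := continuous_const.sub hggcont
  have hau : a - u = a * cfc f y' := by
    have h1 : cfc f y' = 1 - cfc gg y' := by
      rw [hfdef, cfc_sub (fun _ : ℝ => (1:ℝ)) gg y' continuousOn_const hggcont.continuousOn,
        cfc_const_one ℝ y']
    rw [h1, hudef]; noncomm_ring
  have hy'spec : ∀ t ∈ spectrum ℝ y', 0 ≤ t := spectrum_nonneg_of_nonneg hy'0
  have hfb : ∀ t ∈ spectrum ℝ y', ‖f t * (t * f t)‖ ≤ ε' := by
    intro t ht
    have ht0 := hy'spec t ht
    rcases le_or_gt t ε' with hte | hte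
    · have hg0 : g t = 0 := max_eq_right (by linarith)
      have : f t = 1 := by rw [hfdef]; simp [hggdef, hg0]
      rw [this]
      simp only [one_mul, mul_one, Real.norm_eq_abs, abs_of_nonneg ht0]
      exact hte
    · have hmx : max t ε' = t := max_eq_left hte.le
      have hgx : g t = t - ε' := max_eq_left (by linarith)
      have htpos : 0 < t := lt_trans hε' hte
      have hf_eq : f t = ε' / t := by
        rw [hfdef]
        show 1 - m t * g t = ε' / t
        rw [hmdef]
        show 1 - (max t ε')⁻¹ * g t = ε' / t
        rw [hmx, hgx]
        field_simp
        ring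
      rw [hf_eq, Real.norm_eq_abs]
      have hval : ε' / t * (t * (ε' / t)) = ε' * (ε' / t) := by field_simp
      rw [hval, abs_of_nonneg (by positivity)]
      calc ε' * (ε' / t) ≤ ε' * 1 := by
            gcongr
            rw [div_le_one htpos]
            exact hte.le
        _ = ε' := mul_one _
  set v : A := a * cfc f y' with hvdef
  have hcfcf_sa : IsSelfAdjoint (cfc f y') := cfc_predicate _ y'
  have hvv : star v * v = cfc (fun t => f t * (t * f t)) y' := by
    rw [hvdef, star_mul, hcfcf_sa.star_eq, ← conj_cfc_self hsa_y' f hfcont.continuousOn,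
      hy'def]
    noncomm_ring
  have hvnorm : ‖v‖ * ‖v‖ ≤ ε' := by
    rw [← CStarRing.norm_star_mul_self, hvv]
    exact norm_cfc_le hε'.le hfb
  have hvle : ‖v‖ ≤ ε'' / 2 := by
    nlinarith [norm_nonneg v, hε'']
  refine ⟨u, huU, ?_⟩
  rw [dist_eq_norm, hau]
  linarith

end ReductionAux

/-- The reduction ideal `J_∞ = closure (⋃ n, J_n)` is the smallest closed
`α`-invariant two-sided ideal `K` satisfying `a ∈ J ∧ α(a) ∈ K → a ∈ K`; moreover
`J_∞ = {0}` if and only if `ker α ∩ J = {0}`. -/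
theorem reductionIdeal_minimality
    {A : Type*} [CStarAlgebra A] (α : A →⋆ₐ[ℂ] A)
    (J : TwoSidedIdeal A) (hJ : IsClosed (J : Set A)) :
    (∃ I : TwoSidedIdeal A,
      (I : Set A) = closure (⋃ n : ℕ, reductionSeq α (J : Set A) n)) ∧
    IsClosed (closure (⋃ n : ℕ, reductionSeq α (J : Set A) n)) ∧
    (∀ a ∈ closure (⋃ n : ℕ, reductionSeq α (J : Set A) n),
      α a ∈ closure (⋃ n : ℕ, reductionSeq α (J : Set A) n)) ∧
    (∀ a ∈ J, α a ∈ closure (⋃ n : ℕ, reductionSeq α (J : Set A) n) →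
      a ∈ closure (⋃ n : ℕ, reductionSeq α (J : Set A) n)) ∧
    (∀ K : TwoSidedIdeal A, IsClosed (K : Set A) → (∀ a ∈ K, α a ∈ K) →
      (∀ a ∈ J, α a ∈ (K : Set A) → a ∈ K) →
      closure (⋃ n : ℕ, reductionSeq α (J : Set A) n) ⊆ (K : Set A)) ∧
    (closure (⋃ n : ℕ, reductionSeq α (J : Set A) n) = ({0} : Set A) ↔
      {a : A | α a = 0} ∩ (J : Set A) = {0}) := by
  set U := ⋃ n : ℕ, reductionSeq α (J : Set A) n with hU
  -- levelwise ideals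
  have hzeroU : (0 : A) ∈ U := Set.mem_iUnion.mpr ⟨0, rfl⟩
  have hUadd : ∀ x ∈ U, ∀ y ∈ U, x + y ∈ U := by
    intro x hx y hy
    obtain ⟨mx, hmx⟩ := Set.mem_iUnion.mp hx
    obtain ⟨my, hmy⟩ := Set.mem_iUnion.mp hy
    obtain ⟨I, hI, -⟩ := seq_ideal α J hJ (max mx my)
    have hx' : x ∈ I := by
      rw [← SetLike.mem_coe, hI]; exact seq_mono' α J (le_max_left _ _) hmx
    have hy' : y ∈ I := by
      rw [← SetLike.mem_coe, hI]; exact seq_mono' α J (le_max_right _ _) hmy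
    exact Set.mem_iUnion.mpr ⟨max mx my, by
      rw [← hI, SetLike.mem_coe] at *; exact I.add_mem hx' hy'⟩
  have hUneg : ∀ x ∈ U, -x ∈ U := by
    intro x hx
    obtain ⟨mx, hmx⟩ := Set.mem_iUnion.mp hx
    obtain ⟨I, hI, -⟩ := seq_ideal α J hJ mx
    have hx' : x ∈ I := by rw [← SetLike.mem_coe, hI]; exact hmx
    exact Set.mem_iUnion.mpr ⟨mx, by rw [← hI, SetLike.mem_coe]; exact I.neg_mem hx'⟩
  have hUmull : ∀ (r : A), ∀ x ∈ U, r * x ∈ U := by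
    intro r x hx
    obtain ⟨mx, hmx⟩ := Set.mem_iUnion.mp hx
    obtain ⟨I, hI, -⟩ := seq_ideal α J hJ mx
    have hx' : x ∈ I := by rw [← SetLike.mem_coe, hI]; exact hmx
    exact Set.mem_iUnion.mpr ⟨mx, by
      rw [← hI, SetLike.mem_coe]; exact I.mul_mem_left _ _ hx'⟩
  have hUmulr : ∀ (r : A), ∀ x ∈ U, x * r ∈ U := by
    intro r x hx
    obtain ⟨mx, hmx⟩ := Set.mem_iUnion.mp hx
    obtain ⟨I, hI, -⟩ := seq_ideal α J hJ mx
    have hx' : x ∈ I := by rw [← SetLike.mem_coe, hI]; exact hmx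
    exact Set.mem_iUnion.mpr ⟨mx, by
      rw [← hI, SetLike.mem_coe]; exact I.mul_mem_right _ _ hx'⟩
  refine ⟨?_, isClosed_closure, ?_, ?_, ?_, ?_⟩
  -- ideal structure of the closure
  · refine ⟨TwoSidedIdeal.mk' (closure U) (subset_closure hzeroU) ?_ ?_ ?_ ?_, ?_⟩
    · intro x y hx hy
      obtain ⟨ux, hux, huxl⟩ := mem_closure_iff_seq_limit.mp hx
      obtain ⟨uy, huy, huyl⟩ := mem_closure_iff_seq_limit.mp hy
      exact mem_closure_iff_seq_limit.mpr
        ⟨fun k => ux k + uy k, fun k => hUadd _ (hux k) _ (huy k), huxl.add huyl⟩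
    · intro x hx
      obtain ⟨ux, hux, huxl⟩ := mem_closure_iff_seq_limit.mp hx
      exact mem_closure_iff_seq_limit.mpr
        ⟨fun k => -ux k, fun k => hUneg _ (hux k), huxl.neg⟩
    · intro x y hy
      obtain ⟨uy, huy, huyl⟩ := mem_closure_iff_seq_limit.mp hy
      exact mem_closure_iff_seq_limit.mpr
        ⟨fun k => x * uy k, fun k => hUmull x _ (huy k), huyl.const_mul x⟩
    · intro x y hx
      obtain ⟨ux, hux, huxl⟩ := mem_closure_iff_seq_limit.mp hx
      exact mem_closure_iff_seq_limit.mpr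
        ⟨fun k => ux k * y, fun k => hUmulr y _ (hux k), huxl.mul_const y⟩
    · exact TwoSidedIdeal.coe_mk' _ _ _ _ _ _
  -- invariance
  · have hUinv : ∀ x ∈ U, α x ∈ U := by
      intro x hx
      obtain ⟨n, hn⟩ := Set.mem_iUnion.mp hx
      cases n with
      | zero =>
        have hx0 : x = 0 := by simpa [reductionSeq] using hn
        subst hx0
        rw [map_zero]
        exact hzeroU
      | succ n =>
        exact Set.mem_iUnion.mpr ⟨n, ((mem_succ_iff α J).mp hn).2⟩
    intro a ha
    exact Set.MapsTo.closure (fun x hx => hUinv x hx) (myContinuous α) ha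
  -- absorption
  · intro a ha hx
    exact absorb α J hJ ha hx
  -- minimality
  · intro K hKc hKinv hKabs
    have hlev : ∀ n, reductionSeq α (J : Set A) n ⊆ (K : Set A) := by
      intro n
      induction n with
      | zero =>
        intro x hx
        have hx0 : x = 0 := by simpa [reductionSeq] using hx
        subst hx0
        exact SetLike.mem_coe.mpr K.zero_mem
      | succ n ih =>
        intro x hx
        obtain ⟨h1, h2⟩ := (mem_succ_iff α J).mp hx
        exact SetLike.mem_coe.mpr (hKabs x h1 (ih h2))
    exact closure_minimal (Set.iUnion_subset hlev) hKc
  -- triviality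
  · constructor
    · intro h
      ext x
      simp only [Set.mem_inter_iff, Set.mem_setOf_eq, Set.mem_singleton_iff]
      constructor
      · rintro ⟨h1, h2⟩
        have hx1 : x ∈ reductionSeq α (J : Set A) 1 :=
          (mem_succ_iff α J).mpr ⟨SetLike.mem_coe.mp h2, by rw [h1]; rfl⟩
        have hcl : x ∈ closure U := subset_closure (Set.mem_iUnion.mpr ⟨1, hx1⟩)
        have h2x : x ∈ ({0} : Set A) := by rw [← h]; exact hcl
        exact h2x
      · rintro rfl
        exact ⟨map_zero α, SetLike.mem_coe.mpr J.zero_mem⟩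
    · intro h
      have hlev : ∀ n, reductionSeq α (J : Set A) n = {0} := by
        intro n
        induction n with
        | zero => rfl
        | succ n ih =>
          ext x
          rw [mem_succ_iff α J, ih]
          constructor
          · rintro ⟨h1, h2⟩
            have : x ∈ ({a : A | α a = 0} ∩ (J : Set A)) := ⟨h2, SetLike.mem_coe.mpr h1⟩
            rw [h] at this
            exact this
          · rintro rfl
            exact ⟨J.zero_mem, map_zero α⟩
      have : U = {0} := by
        rw [hU]
        apply Set.Subset.antisymm
        · exact Set.iUnion_subset fun n => (hlev n).le
        · exact fun x hx => Set.mem_iUnion.mpr ⟨0, hx⟩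
      rw [hU] at this ⊢
      rw [this, closure_singleton]
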